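/- Let φ: ℝ² → ℝ² be the rotation by 45 degrees about the origin. For any two distinct points v1, v2 ∈ ℝ², the line determined by φ(v1) and φ(v2) in the L∞ metric equals the image under φ of the line determined by v1 and v2 in the L1 metric: ⟨φ(v1), φ(v2)⟩_∞ = {φ(u) : u ∈ ⟨v1, v2⟩_1}. -/

import Mathlib

/-- L1 (Manhattan) distance on the plane. -/
noncomputable def d1 (p q : ℝ × ℝ) : ℝ := |p.1 - q.1| + |p.2 - q.2|

/-- L∞ distance on the plane. -/
noncomputable def dInf (p q : ℝ × ℝ) : ℝ := max |p.1 - q.1| |p.2 - q.2|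

def btw1 (a x b : ℝ × ℝ) : Prop := d1 a b = d1 a x + d1 x b

def btwInf (a x b : ℝ × ℝ) : Prop := dInf a b = dInf a x + dInf x b

def line1 (a b : ℝ × ℝ) : Set (ℝ × ℝ) :=
  {x | btw1 x a b ∨ btw1 a x b ∨ btw1 a b x}

def lineInf (a b : ℝ × ℝ) : Set (ℝ × ℝ) :=
  {x | btwInf x a b ∨ btwInf a x b ∨ btwInf a b x}

/-- Rotation by 45 degrees about the origin. -/
noncomputable def rot45 (p : ℝ × ℝ) : ℝ × ℝ :=
  ((p.1 - p.2) / Real.sqrt 2, (p.1 + p.2) / Real.sqrt 2)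

lemma sqrt2_pos : (0:ℝ) < Real.sqrt 2 := Real.sqrt_pos.2 (by norm_num)

lemma max_abs_eq (a b : ℝ) : max |a - b| |a + b| = |a| + |b| := by
  rcases abs_cases a with ⟨ha, ha'⟩ | ⟨ha, ha'⟩ <;>
  rcases abs_cases b with ⟨hb, hb'⟩ | ⟨hb, hb'⟩ <;>
  rcases abs_cases (a - b) with ⟨h1, h1'⟩ | ⟨h1, h1'⟩ <;>
  rcases abs_cases (a + b) with ⟨h2, h2'⟩ | ⟨h2, h2'⟩ <;>
  rcases max_cases |a - b| |a + b| with ⟨hm, hm'⟩ | ⟨hm, hm'⟩ <;>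
  linarith

lemma dInf_rot (p q : ℝ × ℝ) : dInf (rot45 p) (rot45 q) = d1 p q / Real.sqrt 2 := by
  have h2 : Real.sqrt 2 ≠ 0 := ne_of_gt sqrt2_pos
  simp only [dInf, d1, rot45, div_sub_div_same, abs_div, abs_of_pos sqrt2_pos]
  rw [max_div_div_right (le_of_lt sqrt2_pos)]
  congr 1
  have : p.1 - p.2 - (q.1 - q.2) = (p.1 - q.1) - (p.2 - q.2) := by ring
  rw [this]
  have : p.1 + p.2 - (q.1 + q.2) = (p.1 - q.1) + (p.2 - q.2) := by ring
  rw [this, max_abs_eq]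

lemma btw_rot (a x b : ℝ × ℝ) : btwInf (rot45 a) (rot45 x) (rot45 b) ↔ btw1 a x b := by
  have h2 : Real.sqrt 2 ≠ 0 := ne_of_gt sqrt2_pos
  unfold btwInf btw1
  rw [dInf_rot, dInf_rot, dInf_rot, ← add_div, div_left_inj' h2]

lemma rot_surj : Function.Surjective rot45 := by
  intro q
  refine ⟨((q.1 + q.2) / Real.sqrt 2, (q.2 - q.1) / Real.sqrt 2), ?_⟩
  have h2 : Real.sqrt 2 ≠ 0 := ne_of_gt sqrt2_pos
  have hsq : Real.sqrt 2 * Real.sqrt 2 = 2 := Real.mul_self_sqrt (by norm_num)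
  simp only [rot45, Prod.ext_iff]
  constructor <;> field_simp <;> rw [Real.sq_sqrt (by norm_num)] <;> linarith [hsq, mul_comm q.1 (Real.sqrt 2), mul_comm q.2 (Real.sqrt 2)]

theorem linf_line_eq_rotated_l1_line (v1 v2 : ℝ × ℝ) (h : v1 ≠ v2) :
    lineInf (rot45 v1) (rot45 v2) = rot45 '' (line1 v1 v2) := by
  ext x
  constructor
  · intro hx
    obtain ⟨u, rfl⟩ := rot_surj x
    exact ⟨u, by simpa [lineInf, line1, Set.mem_setOf_eq, btw_rot] using hx, rfl⟩
  · rintro ⟨u, hu, rfl⟩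
    simpa [lineInf, line1, Set.mem_setOf_eq, btw_rot] using hu
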